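/- Let h > 0 and let w₁, w₂ : ℝ × ℝ → ℝ be C² functions (arguments (t, x)) each satisfying the integrated Burgers equation ∂w/∂t + (1/2)(∂w/∂x)² − (h/2)·∂²w/∂x² = 0 at every point. Then for any constants λ₁, λ₂ ∈ ℝ, the generalized linear combination w := (λ₁ ⊙ w₁) ⊕_h (λ₂ ⊙ w₂), given explicitly by w(t, x) = −h·ln( e^{−(λ₁ + w₁(t,x))/h} + e^{−(λ₂ + w₂(t,x))/h} ), also satisfies the integrated Burgers equation at every point. (This is the superposition principle: the Burgers equation is linear over the deformed operations w₁ ⊕_h w₂ = −h·ln(e^{−w₁/h} + e^{−w₂/h}) and λ ⊙ w = λ + w.) -/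

import Mathlib

/-- Superposition principle for the integrated Burgers equation: if `w₁, w₂`
are `C²` solutions of `∂w/∂t + (1/2)(∂w/∂x)² − (h/2)·∂²w/∂x² = 0`, then for
any constants `λ₁, λ₂` the generalized linear combination
`w = (λ₁ ⊙ w₁) ⊕_h (λ₂ ⊙ w₂)`, i.e.
`w(t,x) = −h·ln(e^{−(λ₁+w₁(t,x))/h} + e^{−(λ₂+w₂(t,x))/h})`,
is also a solution. -/
theorem burgers_superposition (h : ℝ) (hh : 0 < h) (w₁ w₂ : ℝ → ℝ → ℝ)
    (hw₁ : ContDiff ℝ 2 (fun p : ℝ × ℝ => w₁ p.1 p.2))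
    (hw₂ : ContDiff ℝ 2 (fun p : ℝ × ℝ => w₂ p.1 p.2))
    (hb₁ : ∀ t x, deriv (fun s => w₁ s x) t
        + (1 / 2) * (deriv (fun y => w₁ t y) x) ^ 2
        - (h / 2) * deriv (deriv (fun y => w₁ t y)) x = 0)
    (hb₂ : ∀ t x, deriv (fun s => w₂ s x) t
        + (1 / 2) * (deriv (fun y => w₂ t y) x) ^ 2
        - (h / 2) * deriv (deriv (fun y => w₂ t y)) x = 0)
    (l₁ l₂ : ℝ) (w : ℝ → ℝ → ℝ)
    (hw : ∀ t x, w t x = -h * Real.log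
        (Real.exp (-(l₁ + w₁ t x) / h) + Real.exp (-(l₂ + w₂ t x) / h))) :
    ∀ t x, deriv (fun s => w s x) t
        + (1 / 2) * (deriv (fun y => w t y) x) ^ 2
        - (h / 2) * deriv (deriv (fun y => w t y)) x = 0 := by
  intro t x
  have hne : h ≠ 0 := ne_of_gt hh
  -- regularity of the x-slices
  have hs₁ : ContDiff ℝ 2 fun y => w₁ t y := hw₁.comp (contDiff_prodMk_right t)
  have hs₂ : ContDiff ℝ 2 fun y => w₂ t y := hw₂.comp (contDiff_prodMk_right t)
  have hd₁ : Differentiable ℝ fun y => w₁ t y := hs₁.differentiable two_ne_zero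
  have hd₂ : Differentiable ℝ fun y => w₂ t y := hs₂.differentiable two_ne_zero
  have hdd₁ : Differentiable ℝ (deriv fun y => w₁ t y) := by
    have h2 : ContDiff ℝ (1 + 1) fun y => w₁ t y := by norm_num [hs₁]
    exact ((contDiff_succ_iff_deriv.mp h2).2.2).differentiable one_ne_zero
  have hdd₂ : Differentiable ℝ (deriv fun y => w₂ t y) := by
    have h2 : ContDiff ℝ (1 + 1) fun y => w₂ t y := by norm_num [hs₂]
    exact ((contDiff_succ_iff_deriv.mp h2).2.2).differentiable one_ne_zero
  -- regularity of the t-slices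
  have ht₁ : Differentiable ℝ fun s => w₁ s x :=
    (hw₁.comp (contDiff_prodMk_left x)).differentiable two_ne_zero
  have ht₂ : Differentiable ℝ fun s => w₂ s x :=
    (hw₂.comp (contDiff_prodMk_left x)).differentiable two_ne_zero
  -- notations
  set d₁ : ℝ → ℝ := deriv fun y => w₁ t y with hd₁def
  set d₂ : ℝ → ℝ := deriv fun y => w₂ t y with hd₂def
  set E₁ : ℝ → ℝ := fun y => Real.exp (-(l₁ + w₁ t y) / h) with hE₁def
  set E₂ : ℝ → ℝ := fun y => Real.exp (-(l₂ + w₂ t y) / h) with hE₂def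
  have hpos : ∀ y, 0 < E₁ y + E₂ y := fun y =>
    add_pos (Real.exp_pos _) (Real.exp_pos _)
  -- spatial derivatives of the exponentials
  have hE₁' : ∀ y, HasDerivAt E₁ (E₁ y * (-(d₁ y) / h)) y := by
    intro y
    have h0 : HasDerivAt (fun z => w₁ t z) (d₁ y) y := (hd₁ y).hasDerivAt
    exact (((h0.const_add l₁).neg).div_const h).exp
  have hE₂' : ∀ y, HasDerivAt E₂ (E₂ y * (-(d₂ y) / h)) y := by
    intro y
    have h0 : HasDerivAt (fun z => w₂ t z) (d₂ y) y := (hd₂ y).hasDerivAt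
    exact (((h0.const_add l₂).neg).div_const h).exp
  -- first x-derivative of w as a function
  have hDW : (deriv fun y => w t y)
      = fun y => (E₁ y * d₁ y + E₂ y * d₂ y) / (E₁ y + E₂ y) := by
    funext y
    have hw' : (fun y => w t y) = fun y => -h * Real.log (E₁ y + E₂ y) :=
      funext fun y => hw t y
    rw [hw']
    have hsum : HasDerivAt (fun z => E₁ z + E₂ z)
        (E₁ y * (-(d₁ y) / h) + E₂ y * (-(d₂ y) / h)) y := (hE₁' y).add (hE₂' y)
    have hlog := (hsum.log (hpos y).ne').const_mul (-h)
    rw [hlog.deriv]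
    field_simp
    ring
  -- abbreviations at the point (t, x)
  set A := E₁ x with hA
  set B := E₂ x with hB
  set a₁ := d₁ x with ha₁
  set a₂ := d₂ x with ha₂
  set b₁ := deriv d₁ x with hb₁'
  set b₂ := deriv d₂ x with hb₂'
  set c₁ := deriv (fun s => w₁ s x) t with hc₁
  set c₂ := deriv (fun s => w₂ s x) t with hc₂
  -- second x-derivative of w at x
  have hN : HasDerivAt (fun y => E₁ y * d₁ y + E₂ y * d₂ y)
      ((E₁ x * (-(d₁ x) / h)) * a₁ + A * b₁
        + (E₂ x * (-(d₂ x) / h)) * a₂ + B * b₂) x := by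
    have h1 : HasDerivAt d₁ b₁ x := (hdd₁ x).hasDerivAt
    have h2 : HasDerivAt d₂ b₂ x := (hdd₂ x).hasDerivAt
    have := ((hE₁' x).mul h1).add ((hE₂' x).mul h2)
    exact this.congr_deriv (by ring)
  have hS : HasDerivAt (fun y => E₁ y + E₂ y)
      (A * (-(a₁) / h) + B * (-(a₂) / h)) x := (hE₁' x).add (hE₂' x)
  have hWxx : deriv (deriv fun y => w t y) x
      = (((A * (-(a₁) / h)) * a₁ + A * b₁ + (B * (-(a₂) / h)) * a₂ + B * b₂)
            * (A + B)
          - (A * a₁ + B * a₂) * (A * (-(a₁) / h) + B * (-(a₂) / h)))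
        / (A + B) ^ 2 := by
    rw [hDW]
    exact (hN.div hS (hpos x).ne').deriv
  -- time derivative of w at t
  have hWt : deriv (fun s => w s x) t
      = -h * ((A * (-(c₁) / h) + B * (-(c₂) / h)) / (A + B)) := by
    have hw' : (fun s => w s x)
        = fun s => -h * Real.log
            (Real.exp (-(l₁ + w₁ s x) / h) + Real.exp (-(l₂ + w₂ s x) / h)) :=
      funext fun s => hw s x
    rw [hw']
    have hF₁ : HasDerivAt (fun s => Real.exp (-(l₁ + w₁ s x) / h))
        (A * (-(c₁) / h)) t := by
      have h0 : HasDerivAt (fun s => w₁ s x) c₁ t := (ht₁ t).hasDerivAt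
      exact (((h0.const_add l₁).neg).div_const h).exp
    have hF₂ : HasDerivAt (fun s => Real.exp (-(l₂ + w₂ s x) / h))
        (B * (-(c₂) / h)) t := by
      have h0 : HasDerivAt (fun s => w₂ s x) c₂ t := (ht₂ t).hasDerivAt
      exact (((h0.const_add l₂).neg).div_const h).exp
    have hsum := hF₁.add hF₂
    have hposx : Real.exp (-(l₁ + w₁ t x) / h) + Real.exp (-(l₂ + w₂ t x) / h) ≠ 0 :=
      (add_pos (Real.exp_pos _) (Real.exp_pos _)).ne'
    exact ((hsum.log hposx).const_mul (-h)).deriv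
  -- the values of the first x-derivative
  have hWx : deriv (fun y => w t y) x = (A * a₁ + B * a₂) / (A + B) := by
    rw [hDW]
  -- Burgers equations give the time derivatives
  have hcc₁ : c₁ = (h * b₁ - a₁ ^ 2) / 2 := by
    have := hb₁ t x
    have e1 : deriv (fun y => w₁ t y) x = a₁ := rfl
    have e2 : deriv (deriv fun y => w₁ t y) x = b₁ := rfl
    rw [e1, e2] at this
    linarith
  have hcc₂ : c₂ = (h * b₂ - a₂ ^ 2) / 2 := by
    have := hb₂ t x
    have e1 : deriv (fun y => w₂ t y) x = a₂ := rfl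
    have e2 : deriv (deriv fun y => w₂ t y) x = b₂ := rfl
    rw [e1, e2] at this
    linarith
  rw [hWt, hWx, hWxx, hcc₁, hcc₂]
  have hAB : A + B ≠ 0 := (hpos x).ne'
  field_simp
  ring
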